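/- Let K be a field complete with respect to a nonarchimedean absolute value ‖·‖, and let q ∈ K satisfy 0 < ‖q‖ < 1. Let Γ(t) = 1 + Σ_{n≥1} a_n t^n be an entire power series over K. Then: (1) for every n ≥ 0, the n-th coefficient of the partial product P_N(t) = ∏_{i=0}^{N−1} Γ(q^i t) converges in K as N → ∞, defining a power series Δ(t) = 1 + Σ_{n≥1} b_n t^n (denoted δ^{−1}(Γ)); (2) Δ is entire; and (3) Δ(t) = Γ(t) · Δ(qt) as power series, i.e. δ(Δ) = Γ where δ(Δ)(t) = Δ(t)/Δ(qt). -/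

import Mathlib

open Filter PowerSeries

/-- A power series `Γ ∈ K⟦t⟧` is entire if its coefficients tend to zero faster than
any geometric sequence: for every `r > 0`, `‖a_n‖ r^n → 0`. -/
def IsEntirePowerSeries {K : Type*} [NormedField K] (f : PowerSeries K) : Prop :=
  ∀ r : ℝ, 0 < r →
    Tendsto (fun n : ℕ => ‖PowerSeries.coeff n f‖ * r ^ n) atTop (nhds 0)

/-- The coefficient sequence of `δ⁻¹(Γ)`, defined by the recursion
`b 0 = 1`, `b (n+1) = (1 - q^(n+1))⁻¹ ∑_{k ≤ n} a_{n+1-k} q^k b_k`. -/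
noncomputable def bseq {K : Type*} [Field K] (q : K) (a : ℕ → K) : ℕ → K
  | 0 => 1
  | (n+1) => (1 - q^(n+1))⁻¹ *
      ∑ k ∈ (Finset.range (n+1)).attach, a (n+1-(k:ℕ)) * q^(k:ℕ) * bseq q a (k:ℕ)
  decreasing_by exact Finset.mem_range.mp k.2

lemma bseq_succ {K : Type*} [Field K] (q : K) (a : ℕ → K) (n : ℕ) :
    bseq q a (n+1)
      = (1 - q^(n+1))⁻¹ * ∑ k ∈ Finset.range (n+1), a (n+1-k) * q^k * bseq q a k := by
  rw [bseq]
  exact congrArg _ (Finset.sum_attach _ (fun k => a (n+1-k) * q^k * bseq q a k))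

/-- For an entire `Γ` with constant term `1` over a complete nonarchimedean field and
`0 < ‖q‖ < 1`: the coefficients of the partial products `∏_{i<N} Γ(q^i t)` converge,
defining an entire power series `Δ = δ⁻¹(Γ)` with constant term `1`
satisfying `Δ(t) = Γ(t)·Δ(qt)`.  Here `Γ(q^i t)` is `PowerSeries.rescale (q^i) Γ`. -/
theorem stmt5 (K : Type*) [NontriviallyNormedField K] [CompleteSpace K]
    [IsUltrametricDist K]
    (q : K) (hq0 : 0 < ‖q‖) (hq1 : ‖q‖ < 1)
    (Γ : PowerSeries K) (hΓ0 : PowerSeries.coeff 0 Γ = 1)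
    (hΓent : IsEntirePowerSeries Γ) :
    ∃ Δ : PowerSeries K,
      (∀ n : ℕ,
        Tendsto
          (fun N : ℕ => PowerSeries.coeff n
            (∏ i ∈ Finset.range N, PowerSeries.rescale (q ^ i) Γ))
          atTop (nhds (PowerSeries.coeff n Δ))) ∧
      PowerSeries.coeff 0 Δ = 1 ∧
      IsEntirePowerSeries Δ ∧
      Δ = Γ * PowerSeries.rescale q Δ := by
  have hq0' : (0:ℝ) ≤ ‖q‖ := norm_nonneg q
  set a : ℕ → K := fun n => PowerSeries.coeff n Γ with ha_def
  have ha' : ∀ k, PowerSeries.coeff k Γ = a k := fun _ => rfl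
  have ha0 : a 0 = 1 := hΓ0
  have ha0' : ‖a 0‖ = 1 := by rw [ha0, norm_one]
  set b : ℕ → K := bseq q a with hb_def
  have hb0 : b 0 = 1 := by rw [hb_def, bseq]
  set Δ : PowerSeries K := PowerSeries.mk b with hΔ_def
  have hcΔ : ∀ n, PowerSeries.coeff n Δ = b n := fun n => PowerSeries.coeff_mk n b
  -- ‖1 - q^(n+1)‖ = 1
  have hqn1 : ∀ n : ℕ, ‖q ^ (n+1)‖ < 1 := by
    intro n; rw [norm_pow]; exact pow_lt_one₀ hq0' hq1 (Nat.succ_ne_zero n)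
  have hone : ∀ n : ℕ, ‖(1:K) - q^(n+1)‖ = 1 := by
    intro n
    rw [sub_eq_add_neg,
      IsUltrametricDist.norm_add_eq_max_of_norm_ne_norm
        (by rw [norm_one, norm_neg]; exact (hqn1 n).ne'),
      norm_one, norm_neg]
    exact max_eq_left (hqn1 n).le
  have hone0 : ∀ n : ℕ, (1:K) - q^(n+1) ≠ 0 := by
    intro n; rw [← norm_ne_zero_iff, hone n]; norm_num
  have hinv : ∀ n : ℕ, ‖((1:K) - q^(n+1))⁻¹‖ = 1 := by
    intro n; rw [norm_inv, hone n]; norm_num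
  -- the basic recursion bound
  have hbrec : ∀ (n : ℕ) (C : ℝ), 0 ≤ C →
      (∀ k ∈ Finset.range (n+1), ‖a (n+1-k)‖ * ‖q‖^k * ‖b k‖ ≤ C) → ‖b (n+1)‖ ≤ C := by
    intro n C hC h
    rw [hb_def, bseq_succ, norm_mul, hinv n, one_mul]
    apply IsUltrametricDist.norm_sum_le_of_forall_le_of_nonneg hC
    intro k hk
    rw [norm_mul, norm_mul, norm_pow]
    exact h k hk
  -- bound on the coefficients of Γ
  obtain ⟨A₀, hA₀⟩ : ∃ A₀, ∀ k, ‖a k‖ ≤ A₀ := by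
    have h1 := hΓent 1 one_pos
    simp only [one_pow, mul_one] at h1
    obtain ⟨A₀, hA₀⟩ := h1.bddAbove_range
    exact ⟨A₀, fun k => hA₀ ⟨k, rfl⟩⟩
  have hA₀0 : (0:ℝ) ≤ A₀ := le_trans (norm_nonneg _) (hA₀ 0)
  -- small radius bound: ‖b n‖ s^n ≤ 1
  set s : ℝ := min 1 (A₀ + 1)⁻¹ with hs_def
  have hs0 : 0 < s := lt_min one_pos (by positivity)
  have hsa : ∀ k, ‖a k‖ * s ^ k ≤ 1 := by
    intro k
    cases k with
    | zero => simp [ha0']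
    | succ k =>
      calc ‖a (k+1)‖ * s ^ (k+1) ≤ A₀ * s ^ 1 := by
            apply mul_le_mul (hA₀ _) _ (by positivity) hA₀0
            exact pow_le_pow_of_le_one hs0.le (min_le_left _ _) (by omega)
        _ ≤ A₀ * (A₀+1)⁻¹ := by
            rw [pow_one]; exact mul_le_mul_of_nonneg_left (min_le_right _ _) hA₀0
        _ ≤ 1 := by
            rw [← div_eq_mul_inv, div_le_one (by positivity)]; linarith
  have hsb : ∀ n, ‖b n‖ * s ^ n ≤ 1 := by
    intro n
    induction n using Nat.strong_induction_on with
    | _ n ih =>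
      match n with
      | 0 => simp [hb0]
      | (n+1) =>
        have key : ‖b (n+1)‖ ≤ (s ^ (n+1))⁻¹ := by
          apply hbrec n _ (by positivity)
          intro k hk
          have hk' : k < n + 1 := Finset.mem_range.mp hk
          have hmul : (‖a (n+1-k)‖ * ‖q‖^k * ‖b k‖) * s^(n+1) ≤ 1 := by
            have hsplit : s^(n+1) = s^(n+1-k) * s^k := by
              rw [← pow_add]; congr 1; omega
            calc (‖a (n+1-k)‖ * ‖q‖^k * ‖b k‖) * s^(n+1)
                = (‖a (n+1-k)‖ * s^(n+1-k)) * ((‖b k‖ * s^k) * ‖q‖^k) := by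
                  rw [hsplit]; ring
              _ ≤ 1 * (1 * 1) := by
                  apply mul_le_mul (hsa _) _ (by positivity) (by norm_num)
                  apply mul_le_mul (ih k hk') (pow_le_one₀ hq0' hq1.le)
                    (by positivity) (by norm_num)
              _ = 1 := by norm_num
          have := (le_div_iff₀ (by positivity : (0:ℝ) < s^(n+1))).mpr hmul
          simpa [one_div] using this
        calc ‖b (n+1)‖ * s^(n+1) ≤ (s^(n+1))⁻¹ * s^(n+1) :=
              mul_le_mul_of_nonneg_right key (by positivity)
          _ = 1 := inv_mul_cancel₀ (by positivity)
  -- radius-increasing step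
  have hstep : ∀ (ρ C : ℝ), 0 < ρ → 1 ≤ C → (∀ n, ‖b n‖ * ρ^n ≤ C) →
      ∃ C' ≥ 1, ∀ n, ‖b n‖ * (ρ / ‖q‖)^n ≤ C' := by
    intro ρ C hρ hC1 hbC
    have hρ' : 0 < ρ / ‖q‖ := by positivity
    obtain ⟨A₁, hA₁⟩ : ∃ A₁, ∀ m, ‖a m‖ * (ρ / ‖q‖)^m ≤ A₁ := by
      obtain ⟨A₁, hA₁⟩ := (hΓent (ρ / ‖q‖) hρ').bddAbove_range
      exact ⟨A₁, fun m => hA₁ ⟨m, rfl⟩⟩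
    set C₁ : ℝ := max 1 A₁ with hC₁_def
    have hC₁1 : (1:ℝ) ≤ C₁ := le_max_left _ _
    have hC₁a : ∀ m, ‖a m‖ * (ρ / ‖q‖)^m ≤ C₁ := fun m => (hA₁ m).trans (le_max_right _ _)
    have hCC : (1:ℝ) ≤ C₁ * C := by nlinarith
    refine ⟨C₁ * C, hCC, ?_⟩
    intro n
    match n with
    | 0 => simpa [hb0] using hCC
    | (n+1) =>
      have key : ‖b (n+1)‖ ≤ (C₁ * C) / ((ρ / ‖q‖)^(n+1)) := by
        apply hbrec n _ (by positivity)
        intro k hk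
        have hk' : k < n + 1 := Finset.mem_range.mp hk
        rw [le_div_iff₀ (by positivity : (0:ℝ) < (ρ / ‖q‖)^(n+1))]
        have hsplit : (ρ / ‖q‖)^(n+1) = (ρ / ‖q‖)^(n+1-k) * (ρ / ‖q‖)^k := by
          rw [← pow_add]; congr 1; omega
        have hqρ : ‖q‖^k * (ρ / ‖q‖)^k = ρ^k := by
          rw [← mul_pow, mul_div_cancel₀ _ (ne_of_gt hq0)]
        calc (‖a (n+1-k)‖ * ‖q‖^k * ‖b k‖) * (ρ / ‖q‖)^(n+1)
            = (‖a (n+1-k)‖ * (ρ / ‖q‖)^(n+1-k)) * (‖b k‖ * (‖q‖^k * (ρ / ‖q‖)^k)) := by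
              rw [hsplit]; ring
          _ = (‖a (n+1-k)‖ * (ρ / ‖q‖)^(n+1-k)) * (‖b k‖ * ρ^k) := by rw [hqρ]
          _ ≤ C₁ * C := by
              apply mul_le_mul (hC₁a _) (hbC k) (by positivity) (by linarith)
      calc ‖b (n+1)‖ * (ρ / ‖q‖)^(n+1)
            ≤ ((C₁ * C) / ((ρ / ‖q‖)^(n+1))) * (ρ / ‖q‖)^(n+1) :=
            mul_le_mul_of_nonneg_right key (by positivity)
        _ = C₁ * C := div_mul_cancel₀ _ (by positivity)
  -- bounds at all radii
  have hiter : ∀ j : ℕ, ∃ C ≥ 1, ∀ n, ‖b n‖ * (s / ‖q‖^j)^n ≤ C := by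
    intro j
    induction j with
    | zero => exact ⟨1, le_refl 1, by simpa using hsb⟩
    | succ j ih =>
      obtain ⟨C, hC1, hC⟩ := ih
      obtain ⟨C', hC'1, hC'⟩ := hstep (s / ‖q‖^j) C (by positivity) hC1 hC
      refine ⟨C', hC'1, fun n => ?_⟩
      have : s / ‖q‖^(j+1) = (s / ‖q‖^j) / ‖q‖ := by
        rw [div_div, ← pow_succ]
      rw [this]; exact hC' n
  have hallBdd : ∀ r : ℝ, 0 < r → ∃ C ≥ 1, ∀ n, ‖b n‖ * r^n ≤ C := by
    intro r hr
    obtain ⟨j, hj⟩ := exists_pow_lt_of_lt_one (show (0:ℝ) < s / r by positivity) hq1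
    have hrle : r ≤ s / ‖q‖^j := by
      rw [le_div_iff₀ (by positivity)]
      rw [lt_div_iff₀ hr] at hj
      nlinarith
    obtain ⟨C, hC1, hC⟩ := hiter j
    refine ⟨C, hC1, fun n => le_trans ?_ (hC n)⟩
    apply mul_le_mul_of_nonneg_left _ (norm_nonneg _)
    exact pow_le_pow_left₀ hr.le hrle n
  -- entireness of Δ
  have hΔent : IsEntirePowerSeries Δ := by
    intro r hr
    obtain ⟨C, hC1, hC⟩ := hallBdd (r / ‖q‖) (by positivity)
    apply squeeze_zero_norm (a := fun n => C * ‖q‖^n)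
    · intro n
      have hr' : (r / ‖q‖)^n * ‖q‖^n = r^n := by
        rw [← mul_pow, div_mul_cancel₀ _ (ne_of_gt hq0)]
      rw [Real.norm_eq_abs, abs_of_nonneg (by positivity)]
      calc ‖PowerSeries.coeff n Δ‖ * r^n
          = (‖b n‖ * (r / ‖q‖)^n) * ‖q‖^n := by rw [hcΔ, mul_assoc, hr']
        _ ≤ C * ‖q‖^n := mul_le_mul_of_nonneg_right (hC n) (by positivity)
    · simpa using (tendsto_pow_atTop_nhds_zero_of_lt_one hq0' hq1).const_mul C
  -- the functional equation
  have hfun : Δ = Γ * PowerSeries.rescale q Δ := by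
    ext n
    rw [PowerSeries.coeff_mul, Finset.Nat.sum_antidiagonal_eq_sum_range_succ_mk]
    simp only [PowerSeries.coeff_rescale, hcΔ, ha']
    cases n with
    | zero => simp [ha0, hb0]
    | succ n =>
      rw [Finset.sum_range_succ']
      have hreindex : ∑ i ∈ Finset.range (n+1), a (i+1) * (q^(n-i) * b (n-i))
          = ∑ k ∈ Finset.range (n+1), a (n+1-k) * q^k * b k := by
        rw [← Finset.sum_range_reflect]
        apply Finset.sum_congr rfl
        intro i hi
        have hi' : i < n + 1 := Finset.mem_range.mp hi
        have h1 : n + 1 - 1 - i + 1 = n + 1 - i := by omega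
        have h2 : n - (n + 1 - 1 - i) = i := by omega
        rw [h1, h2]; ring
      have hsum : (1 - q^(n+1)) * b (n+1)
          = ∑ k ∈ Finset.range (n+1), a (n+1-k) * q^k * b k := by
        have hb1 : b (n+1) = (1 - q^(n+1))⁻¹
            * ∑ k ∈ Finset.range (n+1), a (n+1-k) * q^k * b k := bseq_succ q a n
        rw [hb1, ← mul_assoc, mul_inv_cancel₀ (hone0 n), one_mul]
      simp only [Nat.add_sub_add_right, Nat.sub_zero]
      rw [hreindex, ← hsum, ha0, one_mul]
      ring
  -- the partial products
  set P : ℕ → PowerSeries K :=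
    fun N => ∏ i ∈ Finset.range N, PowerSeries.rescale (q ^ i) Γ with hP_def
  -- geometric-type bound on the coefficients of Γ
  obtain ⟨A, hA1, hAk⟩ : ∃ A ≥ (1:ℝ), ∀ k, ‖a k‖ ≤ A ^ k := by
    refine ⟨max 1 A₀, le_max_left _ _, fun k => ?_⟩
    cases k with
    | zero => simp [ha0']
    | succ k =>
      exact le_trans (le_trans (hA₀ _) (le_max_right _ _))
        (le_self_pow₀ (le_max_left _ _) (Nat.succ_ne_zero k))
  have hA0 : (0:ℝ) < A := lt_of_lt_of_le one_pos hA1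
  have hqNle : ∀ N : ℕ, ‖q ^ N‖ ≤ 1 := by
    intro N; rw [norm_pow]; exact pow_le_one₀ hq0' hq1.le
  -- uniform bound on coefficients of the partial products
  have hPbd : ∀ N m : ℕ, ‖PowerSeries.coeff m (P N)‖ ≤ A ^ m := by
    intro N
    induction N with
    | zero =>
      intro m
      simp only [hP_def, Finset.range_zero, Finset.prod_empty, PowerSeries.coeff_one]
      rcases Nat.eq_zero_or_pos m with hm | hm
      · subst hm; simp
      · rw [if_neg (by omega)]; simp only [norm_zero]; positivity
    | succ N ih =>
      intro m
      have hPsucc : P (N+1) = P N * PowerSeries.rescale (q ^ N) Γ :=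
        Finset.prod_range_succ _ N
      rw [hPsucc, PowerSeries.coeff_mul, Finset.Nat.sum_antidiagonal_eq_sum_range_succ_mk]
      apply IsUltrametricDist.norm_sum_le_of_forall_le_of_nonneg
        (pow_nonneg hA0.le m)
      intro k hk
      have hk' : k < m + 1 := Finset.mem_range.mp hk
      rw [norm_mul, PowerSeries.coeff_rescale, norm_mul, norm_pow, ha']
      have h2 : ‖q ^ N‖ ^ (m-k) * ‖a (m-k)‖ ≤ 1 * A ^ (m-k) :=
        mul_le_mul (pow_le_one₀ (norm_nonneg _) (hqNle N)) (hAk (m-k))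
          (norm_nonneg _) zero_le_one
      calc ‖PowerSeries.coeff k (P N)‖ * (‖q ^ N‖ ^ (m-k) * ‖a (m-k)‖)
          ≤ A ^ k * (1 * A ^ (m-k)) :=
            mul_le_mul (ih k) h2 (by positivity) (pow_nonneg hA0.le k)
        _ = A ^ m := by rw [one_mul, ← pow_add]; congr 1; omega
  -- Δ = P N * rescale (q^N) Δ
  have hPΔ : ∀ N : ℕ, Δ = P N * PowerSeries.rescale (q ^ N) Δ := by
    intro N
    induction N with
    | zero => simp [hP_def, PowerSeries.rescale_one]
    | succ N ih =>
      calc Δ = P N * PowerSeries.rescale (q ^ N) Δ := ih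
        _ = P N * PowerSeries.rescale (q ^ N) (Γ * PowerSeries.rescale q Δ) := by
            rw [← hfun]
        _ = P N * (PowerSeries.rescale (q ^ N) Γ
              * PowerSeries.rescale (q ^ N) (PowerSeries.rescale q Δ)) := by
            rw [map_mul]
        _ = P (N+1) * PowerSeries.rescale (q ^ (N+1)) Δ := by
            have hPsucc : P (N+1) = P N * PowerSeries.rescale (q ^ N) Γ :=
              Finset.prod_range_succ _ N
            rw [PowerSeries.rescale_rescale, ← pow_succ', hPsucc, mul_assoc]
  -- assemble
  refine ⟨Δ, ?_, by rw [hcΔ 0, hb0], hΔent, hfun⟩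
  intro n
  show Tendsto (fun N : ℕ => PowerSeries.coeff n (P N)) atTop
    (nhds (PowerSeries.coeff n Δ))
  obtain ⟨B, hB1, hB⟩ := hallBdd 1 one_pos
  have hBb : ∀ j, ‖b j‖ ≤ B := fun j => by simpa using hB j
  have hABq : ∀ N : ℕ, (0:ℝ) ≤ A ^ n * B * ‖q‖ ^ N := fun N =>
    mul_nonneg (mul_nonneg (pow_nonneg hA0.le n) (by linarith)) (by positivity)
  apply tendsto_sub_nhds_zero_iff.mp
  apply squeeze_zero_norm (a := fun N : ℕ => A ^ n * B * ‖q‖ ^ N)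
  · intro N
    have hΔn : PowerSeries.coeff n Δ
        = (∑ k ∈ Finset.range n,
            PowerSeries.coeff k (P N) * ((q ^ N) ^ (n-k) * b (n-k)))
          + PowerSeries.coeff n (P N) := by
      conv_lhs => rw [hPΔ N]
      rw [PowerSeries.coeff_mul, Finset.Nat.sum_antidiagonal_eq_sum_range_succ_mk,
        Finset.sum_range_succ]
      simp only [PowerSeries.coeff_rescale, hcΔ, Nat.sub_self, pow_zero, hb0,
        mul_one, one_mul]
    have hdiff : PowerSeries.coeff n (P N) - PowerSeries.coeff n Δ
        = -∑ k ∈ Finset.range n,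
            PowerSeries.coeff k (P N) * ((q ^ N) ^ (n-k) * b (n-k)) := by
      rw [hΔn]; ring
    rw [hdiff, norm_neg]
    apply IsUltrametricDist.norm_sum_le_of_forall_le_of_nonneg (hABq N)
    intro k hk
    have hk' : k < n := Finset.mem_range.mp hk
    have hqbound : ‖(q ^ N) ^ (n-k)‖ ≤ ‖q‖ ^ N := by
      rw [norm_pow, norm_pow, ← pow_mul]
      exact pow_le_pow_of_le_one hq0' hq1.le (Nat.le_mul_of_pos_right N (by omega))
    rw [norm_mul, norm_mul]
    calc ‖PowerSeries.coeff k (P N)‖ * (‖(q ^ N) ^ (n-k)‖ * ‖b (n-k)‖)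
        ≤ A ^ n * (‖q‖ ^ N * B) := by
          apply mul_le_mul
          · exact le_trans (hPbd N k) (pow_le_pow_right₀ hA1 hk'.le)
          · exact mul_le_mul hqbound (hBb _) (norm_nonneg _) (by positivity)
          · positivity
          · exact pow_nonneg hA0.le n
      _ = A ^ n * B * ‖q‖ ^ N := by ring
  · simpa using (tendsto_pow_atTop_nhds_zero_of_lt_one hq0' hq1).const_mul (A ^ n * B)
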